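/- (∀ distributes over finite joins with disjoint variables.) Let P : Cᵒᵖ → BoolAlg be a first-order Boolean doctrine over a category C with finite products, let n ∈ ℕ, let X₁, …, X_n ∈ C, and let αᵢ ∈ P(Xᵢ) for i = 1, …, n. Then in P(t) one has ⋁_{i=1}^{n} ∀_t^{Xᵢ}(αᵢ) = ∀_t^{∏ᵢXᵢ}(⋁_{i=1}^{n} P(prᵢ)(αᵢ)), where for α ∈ P(X), ∀_t^X(α) denotes the image of α under the right adjoint ∀_t^X : P(t×X) → P(t) after transporting along the canonical isomorphism X ≅ t×X (in particular, for n = 0 this asserts ⊥ = ∀_t^t(⊥) in P(t)). -/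

import Mathlib

open CategoryTheory CategoryTheory.Limits Opposite

universe w v u v₁ u₁ v₂ u₂ v₃ u₃

namespace BooleanDoctrine

/-- Elements of a Boolean algebra in the category `BoolAlg` can be acted on by morphisms. -/
instance (X Y : BoolAlg) : FunLike (X ⟶ Y) X Y :=
  ConcreteCategory.instFunLike

/-- A filter of a Boolean algebra: contains `⊤`, closed under binary meets, upward closed. -/
def IsBAFilter {A : Type*} [BooleanAlgebra A] (F : Set A) : Prop :=
  (⊤ : A) ∈ F ∧ (∀ a b : A, a ∈ F → b ∈ F → a ⊓ b ∈ F) ∧ ∀ a b : A, a ∈ F → a ≤ b → b ∈ F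

/-- The fiber of a Boolean doctrine at an object of the base category. -/
abbrev fiber {C : Type u₁} [Category.{v₁} C] (P : Cᵒᵖ ⥤ BoolAlg.{w}) (X : C) : Type w :=
  P.obj (op X)

/-- A universal filter for a Boolean doctrine `P : Cᵒᵖ ⥤ BoolAlg`. -/
def IsUniversalFilter {C : Type u₁} [Category.{v₁} C] [HasFiniteProducts C]
    (P : Cᵒᵖ ⥤ BoolAlg.{w}) (F : ∀ X : C, Set (P.obj (op X))) : Prop :=
  (∀ (X Y : C) (f : X ⟶ Y) (α : P.obj (op Y)), α ∈ F Y → P.map f.op α ∈ F X) ∧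
    ∀ X : C, IsBAFilter (F X)

/-- A universal ideal for a Boolean doctrine `P : Cᵒᵖ ⥤ BoolAlg`. -/
def IsUniversalIdeal {C : Type u₁} [Category.{v₁} C] [HasFiniteProducts C]
    (P : Cᵒᵖ ⥤ BoolAlg.{w}) (I : ∀ X : C, Set (P.obj (op X))) : Prop :=
  (∀ (X Y : C) (m : ℕ) (f : Fin m → (X ⟶ Y)) (α : P.obj (op Y)),
      (Finset.univ.inf fun j => P.map (f j).op α) ∈ I X → α ∈ I Y) ∧
    (∀ (X : C) (a b : P.obj (op X)), a ≤ b → b ∈ I X → a ∈ I X) ∧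
    (∀ (X₁ X₂ : C) (α₁ : P.obj (op X₁)) (α₂ : P.obj (op X₂)), α₁ ∈ I X₁ → α₂ ∈ I X₂ →
      P.map (prod.fst : X₁ ⨯ X₂ ⟶ X₁).op α₁ ⊔ P.map (prod.snd : X₁ ⨯ X₂ ⟶ X₂).op α₂ ∈
        I (X₁ ⨯ X₂)) ∧
    (⊥ : P.obj (op (⊤_ C))) ∈ I (⊤_ C)

/-- A universal ultrafilter for a Boolean doctrine `P : Cᵒᵖ ⥤ BoolAlg`. -/
def IsUniversalUltrafilter {C : Type u₁} [Category.{v₁} C] [HasFiniteProducts C]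
    (P : Cᵒᵖ ⥤ BoolAlg.{w}) (F : ∀ X : C, Set (P.obj (op X))) : Prop :=
  (∀ (X Y : C) (f : X ⟶ Y) (α : P.obj (op Y)), α ∈ F Y → P.map f.op α ∈ F X) ∧
    (∀ X : C, IsBAFilter (F X)) ∧
    (∀ (X₁ X₂ : C) (α₁ : P.obj (op X₁)) (α₂ : P.obj (op X₂)),
      P.map (prod.fst : X₁ ⨯ X₂ ⟶ X₁).op α₁ ⊔ P.map (prod.snd : X₁ ⨯ X₂ ⟶ X₂).op α₂ ∈
          F (X₁ ⨯ X₂) →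
        α₁ ∈ F X₁ ∨ α₂ ∈ F X₂) ∧
    (⊥ : P.obj (op (⊤_ C))) ∉ F (⊤_ C)

/-- Richness of a Boolean doctrine with respect to a family of subsets of the fibers. -/
def IsRich {C : Type u₁} [Category.{v₁} C] [HasFiniteProducts C]
    (P : Cᵒᵖ ⥤ BoolAlg.{w}) (F : ∀ X : C, Set (P.obj (op X))) : Prop :=
  ∀ (X : C) (α : P.obj (op X)), α ∉ F X → ∃ c : (⊤_ C) ⟶ X, P.map c.op α ∉ F (⊤_ C)

/-- The failure of the "universal closure" of `a` witnessed by a constant `c : ⊤ ⟶ X`. -/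
def IsRichAt {C : Type u₁} [Category.{v₁} C] [HasFiniteProducts C]
    (P : Cᵒᵖ ⥤ BoolAlg.{w}) (F : ∀ X : C, Set (P.obj (op X)))
    (X : C) (a : P.obj (op X)) : Prop :=
  ∃ c : (⊤_ C) ⟶ X, P.map c.op a ∉ F (⊤_ C)

/-- The universal filter generated by a family of subsets of the fibers: the intersection of
all universal filters containing the family componentwise. -/
def genUnivFilter {C : Type u₁} [Category.{v₁} C] [HasFiniteProducts C]
    (P : Cᵒᵖ ⥤ BoolAlg.{w}) (A : ∀ X : C, Set (P.obj (op X))) :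
    ∀ X : C, Set (P.obj (op X)) := fun X =>
  {φ | ∀ G : ∀ X' : C, Set (P.obj (op X')),
    IsUniversalFilter P G → (∀ X', A X' ⊆ G X') → φ ∈ G X}

/-- The universal ideal generated by a family of subsets of the fibers: the intersection of
all universal ideals containing the family componentwise. -/
def genUnivIdeal {C : Type u₁} [Category.{v₁} C] [HasFiniteProducts C]
    (P : Cᵒᵖ ⥤ BoolAlg.{w}) (A : ∀ X : C, Set (P.obj (op X))) :
    ∀ X : C, Set (P.obj (op X)) := fun X =>
  {φ | ∀ J : ∀ X' : C, Set (P.obj (op X')),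
    IsUniversalIdeal P J → (∀ X', A X' ⊆ J X') → φ ∈ J X}

/-- The family of subsets of the fibers placing the element `α i` in the component `Y i`. -/
def familyOfPoints {C : Type u₁} [Category.{v₁} C] (P : Cᵒᵖ ⥤ BoolAlg.{w}) {ι : Type u₃}
    (Y : ι → C) (α : ∀ i, P.obj (op (Y i))) : ∀ X : C, Set (P.obj (op X)) := fun X =>
  {a | ∃ (i : ι) (h : Y i = X), a = P.map (eqToHom h.symm).op (α i)}

/-- The subsets doctrine, sending a set to its powerset Boolean algebra and a function to
its preimage map. -/
def subsetsDoctrine : (Type v)ᵒᵖ ⥤ BoolAlg.{v} where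
  obj X := BoolAlg.of (Set X.unop)
  map f := BoolAlg.ofHom
    { toFun := fun S => f.unop ⁻¹' S
      map_sup' := fun _ _ => rfl
      map_inf' := fun _ _ => rfl
      map_top' := rfl
      map_bot' := rfl }
  map_id _ := rfl
  map_comp _ _ := rfl

/-- A Boolean doctrine morphism: a finite-product-preserving functor together with a
natural transformation. -/
structure DoctrineHom {C : Type u₁} [Category.{v₁} C] {D : Type u₂} [Category.{v₂} D]
    (P : Cᵒᵖ ⥤ BoolAlg.{w}) (R : Dᵒᵖ ⥤ BoolAlg.{w}) where
  functor : C ⥤ D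
  preserves : PreservesFiniteProducts functor
  trans : P ⟶ functor.op ⋙ R

/-- Composition of Boolean doctrine morphisms. -/
def DoctrineHom.comp {C : Type u₁} [Category.{v₁} C] {D : Type u₂} [Category.{v₂} D]
    {E : Type u₃} [Category.{v₃} E]
    {P : Cᵒᵖ ⥤ BoolAlg.{w}} {R : Dᵒᵖ ⥤ BoolAlg.{w}} {S : Eᵒᵖ ⥤ BoolAlg.{w}}
    (Φ : DoctrineHom P R) (Ψ : DoctrineHom R S) : DoctrineHom P S where
  functor := Φ.functor ⋙ Ψ.functor
  preserves := by
    have := Φ.preserves; have := Ψ.preserves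
    infer_instance
  trans := Φ.trans ≫ Functor.whiskerLeft Φ.functor.op Ψ.trans

/-- A first-order structure on a Boolean doctrine: fiberwise right adjoints to reindexing
along first projections, satisfying the Beck–Chevalley condition. -/
structure FOStructure {C : Type u₁} [Category.{v₁} C] [HasFiniteProducts C]
    (P : Cᵒᵖ ⥤ BoolAlg.{w}) where
  fa : ∀ X Y : C, P.obj (op (X ⨯ Y)) → P.obj (op X)
  adj : ∀ (X Y : C) (α : P.obj (op X)) (β : P.obj (op (X ⨯ Y))),
      α ≤ fa X Y β ↔ P.map (prod.fst : X ⨯ Y ⟶ X).op α ≤ β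
  bc : ∀ (X X' Y : C) (f : X' ⟶ X) (β : P.obj (op (X ⨯ Y))),
      P.map f.op (fa X Y β) = fa X' Y (P.map (prod.map f (𝟙 Y)).op β)

/-- The existential quantifier `∃ = ¬∀¬` associated to a first-order structure. -/
noncomputable def FOStructure.ex {C : Type u₁} [Category.{v₁} C] [HasFiniteProducts C]
    {P : Cᵒᵖ ⥤ BoolAlg.{w}} (fo : FOStructure P) (X Y : C)
    (β : P.obj (op (X ⨯ Y))) : P.obj (op X) :=
  (fo.fa X Y βᶜ)ᶜ

/-- The canonical comparison morphism `M X ⨯ M Y ⟶ M (X ⨯ Y)` of a Boolean doctrine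
morphism, inverse to the product comparison morphism. -/
noncomputable def DoctrineHom.prodPair {C : Type u₁} [Category.{v₁} C] [HasFiniteProducts C]
    {D : Type u₂} [Category.{v₂} D] [HasFiniteProducts D]
    {P : Cᵒᵖ ⥤ BoolAlg.{w}} {R : Dᵒᵖ ⥤ BoolAlg.{w}} (Φ : DoctrineHom P R) (X Y : C) :
    (Φ.functor.obj X ⨯ Φ.functor.obj Y) ⟶ Φ.functor.obj (X ⨯ Y) :=
  letI := Φ.preserves
  (PreservesLimitPair.iso Φ.functor X Y).inv

/-- The image of an element of `P (X ⨯ Y)` in `R (M X ⨯ M Y)`, transported along the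
canonical isomorphism `M (X ⨯ Y) ≅ M X ⨯ M Y`. -/
noncomputable def DoctrineHom.transProd {C : Type u₁} [Category.{v₁} C] [HasFiniteProducts C]
    {D : Type u₂} [Category.{v₂} D] [HasFiniteProducts D]
    {P : Cᵒᵖ ⥤ BoolAlg.{w}} {R : Dᵒᵖ ⥤ BoolAlg.{w}} (Φ : DoctrineHom P R) (X Y : C)
    (α : P.obj (op (X ⨯ Y))) : R.obj (op (Φ.functor.obj X ⨯ Φ.functor.obj Y)) :=
  R.map (Φ.prodPair X Y).op (Φ.trans.app (op (X ⨯ Y)) α)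

/-- A Boolean doctrine morphism between first-order Boolean doctrines is first-order when it
commutes with the universal quantifiers. -/
def DoctrineHom.IsFO {C : Type u₁} [Category.{v₁} C] [HasFiniteProducts C]
    {D : Type u₂} [Category.{v₂} D] [HasFiniteProducts D]
    {P : Cᵒᵖ ⥤ BoolAlg.{w}} {R : Dᵒᵖ ⥤ BoolAlg.{w}} (Φ : DoctrineHom P R)
    (foP : FOStructure P) (foR : FOStructure R) : Prop :=
  ∀ (X Y : C) (β : P.obj (op (X ⨯ Y))),
    (Φ.trans.app (op X) (foP.fa X Y β) : R.obj (op (Φ.functor.obj X))) =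
      foR.fa (Φ.functor.obj X) (Φ.functor.obj Y) (Φ.transProd X Y β)

/-- The Boolean doctrine morphism with identity functor part induced by a natural
transformation between two doctrines over the same base. -/
def idDoctrineHom {C : Type u₁} [Category.{v₁} C] {P Q : Cᵒᵖ ⥤ BoolAlg.{w}} (η : P ⟶ Q) :
    DoctrineHom P Q where
  functor := 𝟭 C
  preserves := inferInstance
  trans := η

/-- A quantifier completion of a Boolean doctrine `P`: a first-order Boolean doctrine `Q`
over the same base category together with a Boolean doctrine morphism `(𝟭 C, ι) : P ⟶ Q`
whose functor part is the identity, such that every Boolean doctrine morphism from `P` to a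
first-order Boolean doctrine factors uniquely through it via a first-order Boolean doctrine
morphism. -/
structure QuantifierCompletion.{w', v', u', v₁', u₁'} {C : Type u₁'} [Category.{v₁'} C]
    [HasFiniteProducts C] (P : Cᵒᵖ ⥤ BoolAlg.{w'}) where
  Q : Cᵒᵖ ⥤ BoolAlg.{w'}
  fo : FOStructure Q
  ι : P ⟶ Q
  univ : ∀ {D : Type u'} [Category.{v'} D] [HasFiniteProducts D]
      (R : Dᵒᵖ ⥤ BoolAlg.{w'}) (foR : FOStructure R) (Φ : DoctrineHom P R),
      ∃! Ψ : DoctrineHom Q R, Ψ.IsFO fo foR ∧ Φ = (idDoctrineHom ι).comp Ψ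

/-- A propositional model of a Boolean doctrine: a Boolean doctrine morphism to the
subsets doctrine. -/
abbrev PropModel {C : Type u} [Category.{v} C] (P : Cᵒᵖ ⥤ BoolAlg.{v}) :=
  DoctrineHom P subsetsDoctrine.{v}

/-- The subset of `M X` interpreting an element `α ∈ P X` in a propositional model. -/
def PropModel.interp {C : Type u} [Category.{v} C] {P : Cᵒᵖ ⥤ BoolAlg.{v}}
    (M : PropModel P) {X : C} (α : P.obj (op X)) : Set (M.functor.obj X) :=
  M.trans.app (op X) α



/-- The object map of a Boolean doctrine morphism. -/
abbrev DoctrineHom.onObj {C : Type u₁} [Category.{v₁} C] {D : Type u₂} [Category.{v₂} D]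
    {P : Cᵒᵖ ⥤ BoolAlg.{w}} {R : Dᵒᵖ ⥤ BoolAlg.{w}} (Φ : DoctrineHom P R) (X : C) : D :=
  Φ.functor.obj X

/-- The component at `X` of the natural transformation of a Boolean doctrine morphism,
applied to an element of the fiber. -/
abbrev DoctrineHom.appAt {C : Type u₁} [Category.{v₁} C] {D : Type u₂} [Category.{v₂} D]
    {P : Cᵒᵖ ⥤ BoolAlg.{w}} {R : Dᵒᵖ ⥤ BoolAlg.{w}} (Φ : DoctrineHom P R) (X : C)
    (a : P.obj (op X)) : R.obj (op (Φ.functor.obj X)) :=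
  Φ.trans.app (op X) a


section Stmt17Aux

set_option linter.unusedSectionVars false

variable {C : Type u₁} [Category.{v₁} C] [HasFiniteProducts C] {P : Cᵒᵖ ⥤ BoolAlg.{w}}

lemma inf_compl_le_iff' {A : Type*} [BooleanAlgebra A] (a b c : A) :
    a ⊓ bᶜ ≤ c ↔ a ≤ b ⊔ c := by rw [← sdiff_eq, sdiff_le_iff]

lemma sup_univ_succ' {A : Type*} [SemilatticeSup A] [OrderBot A] {n : ℕ} (f : Fin (n + 1) → A) :
    Finset.univ.sup f = f 0 ⊔ Finset.univ.sup (fun j : Fin n => f j.succ) := by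
  apply le_antisymm
  · refine Finset.sup_le fun i _ => ?_
    refine Fin.cases le_sup_left (fun j => le_sup_of_le_right ?_) i
    exact Finset.le_sup (f := fun j : Fin n => f j.succ) (Finset.mem_univ j)
  · exact sup_le (Finset.le_sup (Finset.mem_univ 0))
      (Finset.sup_le fun j _ => Finset.le_sup (Finset.mem_univ j.succ))

lemma rmap_sup {X Y : C} (f : X ⟶ Y) (a b : P.obj (op Y)) :
    P.map f.op (a ⊔ b) = P.map f.op a ⊔ P.map f.op b :=
  map_sup (show BoundedLatticeHom (P.obj (op Y)) (P.obj (op X)) from (P.map f.op).hom) a b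

lemma rmap_inf {X Y : C} (f : X ⟶ Y) (a b : P.obj (op Y)) :
    P.map f.op (a ⊓ b) = P.map f.op a ⊓ P.map f.op b :=
  map_inf (show BoundedLatticeHom (P.obj (op Y)) (P.obj (op X)) from (P.map f.op).hom) a b

lemma rmap_bot {X Y : C} (f : X ⟶ Y) :
    P.map f.op (⊥ : P.obj (op Y)) = ⊥ :=
  map_bot (show BoundedLatticeHom (P.obj (op Y)) (P.obj (op X)) from (P.map f.op).hom)

lemma rmap_compl {X Y : C} (f : X ⟶ Y) (a : P.obj (op Y)) :
    P.map f.op aᶜ = (P.map f.op a)ᶜ :=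
  map_compl' (show BoundedLatticeHom (P.obj (op Y)) (P.obj (op X)) from (P.map f.op).hom) a

lemma rmap_mono {X Y : C} (f : X ⟶ Y) {a b : P.obj (op Y)} (h : a ≤ b) :
    P.map f.op a ≤ P.map f.op b :=
  OrderHomClass.mono (show BoundedLatticeHom (P.obj (op Y)) (P.obj (op X)) from (P.map f.op).hom) h

lemma rmap_comp {X Y Z : C} (f : X ⟶ Y) (g : Y ⟶ Z) (a : P.obj (op Z)) :
    P.map (f ≫ g).op a = P.map f.op (P.map g.op a) := by
  rw [op_comp, P.map_comp]; rfl

lemma rmap_id {X : C} (a : P.obj (op X)) : P.map (𝟙 X).op a = a := by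
  rw [op_id, P.map_id]; rfl

lemma rmap_congr {X Y : C} {f g : X ⟶ Y} (h : f = g) (a : P.obj (op Y)) :
    P.map f.op a = P.map g.op a := by rw [h]

lemma rmap_finset_sup {X Y : C} (f : X ⟶ Y) {ι : Type*} (s : Finset ι)
    (g : ι → P.obj (op Y)) :
    P.map f.op (s.sup g) = s.sup fun i => P.map f.op (g i) :=
  map_finset_sup (show BoundedLatticeHom (P.obj (op Y)) (P.obj (op X)) from (P.map f.op).hom) s g

variable (fo : FOStructure P)

lemma fa_counit (X Y : C) (β : P.obj (op (X ⨯ Y))) :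
    P.map (prod.fst : X ⨯ Y ⟶ X).op (fo.fa X Y β) ≤ β :=
  (fo.adj X Y _ β).1 le_rfl

lemma fa_mono (X Y : C) {β β' : P.obj (op (X ⨯ Y))} (h : β ≤ β') :
    fo.fa X Y β ≤ fo.fa X Y β' :=
  (fo.adj X Y _ β').2 ((fa_counit fo X Y β).trans h)

lemma fa_le_sec (X Y : C) (β : P.obj (op (X ⨯ Y))) (s : X ⟶ X ⨯ Y)
    (hs : s ≫ (prod.fst : X ⨯ Y ⟶ X) = 𝟙 X) :
    fo.fa X Y β ≤ P.map s.op β := by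
  have h := rmap_mono s (fa_counit fo X Y β)
  rwa [← rmap_comp, hs, rmap_id] at h

lemma fa_le_pull (X Y Z : C) (β : P.obj (op (X ⨯ Y))) (h : Z ⟶ Y) :
    fo.fa X Y β ≤ fo.fa X Z (P.map (prod.map (𝟙 X) h).op β) := by
  rw [fo.adj]
  have h2 := rmap_mono (prod.map (𝟙 X) h) (fa_counit fo X Y β)
  rw [← rmap_comp] at h2
  exact le_trans (le_of_eq (rmap_congr (by simp) _)) h2

lemma fa_iso (X Y Z : C) (e : Y ≅ Z) (β : P.obj (op (X ⨯ Z))) :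
    fo.fa X Z β = fo.fa X Y (P.map (prod.map (𝟙 X) e.hom).op β) := by
  apply le_antisymm (fa_le_pull fo X Z Y β e.hom)
  have h := fa_le_pull fo X Y Z (P.map (prod.map (𝟙 X) e.hom).op β) e.inv
  rw [← rmap_comp] at h
  refine h.trans (le_of_eq ?_)
  rw [rmap_congr (show prod.map (𝟙 X) e.inv ≫ prod.map (𝟙 X) e.hom = 𝟙 (X ⨯ Z) by simp) β,
    rmap_id]

lemma fa_peel (T X Y : C) (B : P.obj (op (T ⨯ X))) (G : P.obj (op (T ⨯ Y))) :
    fo.fa T (X ⨯ Y)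
        (P.map (prod.map (𝟙 T) (prod.fst : X ⨯ Y ⟶ X)).op B ⊔
          P.map (prod.map (𝟙 T) (prod.snd : X ⨯ Y ⟶ Y)).op G) ≤
      fo.fa T X B ⊔ fo.fa T Y G := by
  have main : fo.fa T (X ⨯ Y)
        (P.map (prod.map (𝟙 T) (prod.fst : X ⨯ Y ⟶ X)).op B ⊔
          P.map (prod.map (𝟙 T) (prod.snd : X ⨯ Y ⟶ Y)).op G) ⊓ (fo.fa T Y G)ᶜ ≤
      fo.fa T X B := by
    refine (fo.adj T X _ B).2 ?_
    rw [rmap_inf, rmap_compl, fo.bc T (T ⨯ X) (X ⨯ Y) prod.fst,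
      fo.bc T (T ⨯ X) Y prod.fst]
    set W : P.obj (op ((T ⨯ X) ⨯ (X ⨯ Y))) :=
      P.map (prod.map (prod.fst : T ⨯ X ⟶ T) (𝟙 (X ⨯ Y))).op
        (P.map (prod.map (𝟙 T) (prod.fst : X ⨯ Y ⟶ X)).op B ⊔
          P.map (prod.map (𝟙 T) (prod.snd : X ⨯ Y ⟶ Y)).op G) with hW
    set V : P.obj (op ((T ⨯ X) ⨯ Y)) :=
      P.map (prod.map (prod.fst : T ⨯ X ⟶ T) (𝟙 Y)).op G with hV
    have key : fo.fa (T ⨯ X) (X ⨯ Y) W ≤ B ⊔ fo.fa (T ⨯ X) Y V := by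
      rw [← inf_compl_le_iff', fo.adj, rmap_inf, rmap_compl]
      have claim : P.map (prod.fst : (T ⨯ X) ⨯ Y ⟶ T ⨯ X).op (fo.fa (T ⨯ X) (X ⨯ Y) W) ≤
          P.map (prod.fst : (T ⨯ X) ⨯ Y ⟶ T ⨯ X).op B ⊔ V := by
        set σ : (T ⨯ X) ⨯ Y ⟶ (T ⨯ X) ⨯ (X ⨯ Y) :=
          prod.lift prod.fst (prod.lift (prod.fst ≫ prod.snd) prod.snd) with hσdef
        have hσ := rmap_mono σ (fa_counit fo (T ⨯ X) (X ⨯ Y) W)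
        rw [← rmap_comp] at hσ
        have h1 : σ ≫ (prod.fst : (T ⨯ X) ⨯ (X ⨯ Y) ⟶ T ⨯ X) = prod.fst := by
          simp [hσdef, prod.lift_fst, prod.lift_snd, prod.lift_fst_assoc, prod.lift_snd_assoc]
        rw [rmap_congr h1] at hσ
        refine hσ.trans (le_of_eq ?_)
        have e1 : (σ ≫ prod.map (prod.fst : T ⨯ X ⟶ T) (𝟙 (X ⨯ Y))) ≫
            prod.map (𝟙 T) (prod.fst : X ⨯ Y ⟶ X) = (prod.fst : (T ⨯ X) ⨯ Y ⟶ T ⨯ X) := by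
          apply Limits.prod.hom_ext <;> simp [hσdef, prod.lift_fst, prod.lift_snd, prod.lift_fst_assoc, prod.lift_snd_assoc]
        have e2 : (σ ≫ prod.map (prod.fst : T ⨯ X ⟶ T) (𝟙 (X ⨯ Y))) ≫
            prod.map (𝟙 T) (prod.snd : X ⨯ Y ⟶ Y) = prod.map (prod.fst : T ⨯ X ⟶ T) (𝟙 Y) := by
          apply Limits.prod.hom_ext <;> simp [hσdef, prod.lift_fst, prod.lift_snd, prod.lift_fst_assoc, prod.lift_snd_assoc]
        rw [hW, rmap_sup, rmap_sup, ← rmap_comp, ← rmap_comp, ← rmap_comp, ← rmap_comp,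
          rmap_congr e1, rmap_congr e2, hV]
      exact (inf_compl_le_iff' _ _ _).mpr claim
    exact (inf_compl_le_iff' _ _ _).mpr (key.trans (le_of_eq (sup_comm _ _)))
  exact ((inf_compl_le_iff' _ _ _).mp main).trans (le_of_eq (sup_comm _ _))

/-- The comparison isomorphism between a product over `Fin (n + 1)` and the binary product
of the head factor with the product of the tail. -/
noncomputable def piSuccIso (n : ℕ) (X : Fin (n + 1) → C) :
    (∏ᶜ X) ≅ X 0 ⨯ ∏ᶜ (fun j : Fin n => X j.succ) where
  hom := prod.lift (Pi.π X 0) (Pi.lift fun j => Pi.π X j.succ)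
  inv := Pi.lift fun i => Fin.cases prod.fst (fun j => prod.snd ≫ Pi.π _ j) i
  hom_inv_id := by
    apply Pi.hom_ext
    intro i
    induction i using Fin.cases <;> simp [prod.lift_fst, prod.lift_snd, prod.lift_fst_assoc, prod.lift_snd_assoc]
  inv_hom_id := by
    apply Limits.prod.hom_ext
    · simp [prod.lift_fst, prod.lift_snd, prod.lift_fst_assoc, prod.lift_snd_assoc]
    · apply Pi.hom_ext; intro j; simp [prod.lift_fst, prod.lift_snd, prod.lift_fst_assoc, prod.lift_snd_assoc]

@[simp] lemma piSuccIso_inv_zero (n : ℕ) (X : Fin (n + 1) → C) :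
    (piSuccIso n X).inv ≫ Pi.π X 0 = prod.fst := by simp [piSuccIso]

@[simp] lemma piSuccIso_inv_succ (n : ℕ) (X : Fin (n + 1) → C) (j : Fin n) :
    (piSuccIso n X).inv ≫ Pi.π X j.succ = prod.snd ≫ Pi.π _ j := by simp [piSuccIso]

lemma fa_hard : ∀ (n : ℕ) (X : Fin n → C) (α : ∀ i, P.obj (op (X i))),
    fo.fa (⊤_ C) (∏ᶜ X)
        (P.map (prod.leftUnitor (∏ᶜ X)).hom.op
          (Finset.univ.sup fun i => P.map (Pi.π X i).op (α i))) ≤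
      Finset.univ.sup fun i =>
        fo.fa (⊤_ C) (X i) (P.map (prod.leftUnitor (X i)).hom.op (α i)) := by
  intro n
  induction n with
  | zero =>
    intro X α
    rw [Finset.univ_eq_empty, Finset.sup_empty, Finset.sup_empty, rmap_bot]
    refine le_trans
      (fa_le_sec fo _ _ ⊥ (prod.lift (𝟙 _) (Pi.lift fun i => i.elim0)) (prod.lift_fst _ _)) ?_
    exact le_of_eq (rmap_bot _)
  | succ n ih =>
    intro X α
    rw [fa_iso fo (⊤_ C) (X 0 ⨯ ∏ᶜ fun j : Fin n => X j.succ) (∏ᶜ X) (piSuccIso n X).symm]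
    have harg : P.map (prod.map (𝟙 (⊤_ C)) (piSuccIso n X).symm.hom).op
          (P.map (prod.leftUnitor (∏ᶜ X)).hom.op
            (Finset.univ.sup fun i => P.map (Pi.π X i).op (α i))) =
        P.map (prod.map (𝟙 (⊤_ C))
            (prod.fst : X 0 ⨯ (∏ᶜ fun j : Fin n => X j.succ) ⟶ X 0)).op
          (P.map (prod.leftUnitor (X 0)).hom.op (α 0)) ⊔
        P.map (prod.map (𝟙 (⊤_ C))
            (prod.snd : X 0 ⨯ (∏ᶜ fun j : Fin n => X j.succ) ⟶ _)).op
          (P.map (prod.leftUnitor (∏ᶜ fun j : Fin n => X j.succ)).hom.op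
            (Finset.univ.sup fun j : Fin n =>
              P.map (Pi.π (fun j : Fin n => X j.succ) j).op (α j.succ))) := by
      rw [← rmap_comp, rmap_congr (prod.leftUnitor_hom_naturality (piSuccIso n X).symm.hom),
        rmap_comp, rmap_finset_sup, rmap_finset_sup, sup_univ_succ']
      congr 1
      · rw [← rmap_comp, ← rmap_comp, ← rmap_comp]
        refine rmap_congr ?_ _
        simp
      · rw [rmap_finset_sup, rmap_finset_sup]
        refine Finset.sup_congr rfl fun j _ => ?_
        rw [← rmap_comp, ← rmap_comp, ← rmap_comp, ← rmap_comp]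
        refine rmap_congr ?_ _
        simp
    rw [harg]
    refine le_trans
      (fa_peel fo (⊤_ C) (X 0) (∏ᶜ fun j : Fin n => X j.succ) _ _) ?_
    rw [sup_univ_succ'
      (fun i => fo.fa (⊤_ C) (X i) (P.map (prod.leftUnitor (X i)).hom.op (α i)))]
    exact sup_le_sup le_rfl (ih (fun j => X j.succ) (fun j => α j.succ))

lemma fa_easy (n : ℕ) (X : Fin n → C) (α : ∀ i, P.obj (op (X i))) :
    (Finset.univ.sup fun i =>
        fo.fa (⊤_ C) (X i) (P.map (prod.leftUnitor (X i)).hom.op (α i))) ≤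
      fo.fa (⊤_ C) (∏ᶜ X)
        (P.map (prod.leftUnitor (∏ᶜ X)).hom.op
          (Finset.univ.sup fun i => P.map (Pi.π X i).op (α i))) := by
  refine Finset.sup_le fun i _ => ?_
  refine le_trans (fa_le_pull fo (⊤_ C) (X i) (∏ᶜ X)
    (P.map (prod.leftUnitor (X i)).hom.op (α i)) (Pi.π X i)) ?_
  refine fa_mono fo _ _ ?_
  calc P.map (prod.map (𝟙 (⊤_ C)) (Pi.π X i)).op
        (P.map (prod.leftUnitor (X i)).hom.op (α i))
      = P.map (prod.map (𝟙 (⊤_ C)) (Pi.π X i) ≫ (prod.leftUnitor (X i)).hom).op (α i) :=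
        (rmap_comp _ _ _).symm
    _ = P.map ((prod.leftUnitor (∏ᶜ X)).hom ≫ Pi.π X i).op (α i) :=
        rmap_congr (prod.leftUnitor_hom_naturality _) _
    _ = P.map (prod.leftUnitor (∏ᶜ X)).hom.op (P.map (Pi.π X i).op (α i)) :=
        rmap_comp _ _ _
    _ ≤ _ := rmap_mono _
        (Finset.le_sup (f := fun i => P.map (Pi.π X i).op (α i)) (Finset.mem_univ i))

end Stmt17Aux

theorem stmt17 {C : Type u₁} [Category.{v₁} C] [HasFiniteProducts C]
    (P : Cᵒᵖ ⥤ BoolAlg.{w}) (fo : FOStructure P) (n : ℕ) (X : Fin n → C)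
    (α : ∀ i, P.obj (op (X i))) :
    (Finset.univ.sup fun i =>
        fo.fa (⊤_ C) (X i) (P.map (prod.leftUnitor (X i)).hom.op (α i))) =
      fo.fa (⊤_ C) (∏ᶜ X)
        (P.map (prod.leftUnitor (∏ᶜ X)).hom.op
          (Finset.univ.sup fun i => P.map (Pi.π X i).op (α i))) :=
  le_antisymm (fa_easy fo n X α) (fa_hard fo n X α)

end BooleanDoctrine
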